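/- Let p and q be multiplicatively independent integers, each at least 2. Let σ be a substitution of constant length p on a finite alphabet A with fixed point y, let τ be a substitution of constant length q on a finite alphabet B with fixed point z, and let φ : A → C and ψ : B → C be letter-to-letter morphisms with φ(y) = ψ(z) = x. Then every letter of C having infinitely many occurrences in x occurs in x with bounded gaps. -/

import Mathlib

/-- Extension of a morphism `σ : A → A*` to words by concatenation. -/
def substWord {A : Type*} (σ : A → List A) (w : List A) : List A := w.flatMap σ

/-- `σⁿ(u)` : the `n`-th iterate of the morphism `σ` applied to the word `u`. -/
def wordIter {A : Type*} (σ : A → List A) (n : ℕ) (u : List A) : List A :=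
  (substWord σ)^[n] u

/-- The prefix of length `n` of a one-sided sequence. -/
def seqPrefix {A : Type*} (x : ℕ → A) (n : ℕ) : List A := (List.range n).map x

/-- The word `w` is a prefix of the sequence `x`. -/
def IsPrefixSeq {A : Type*} (w : List A) (x : ℕ → A) : Prop := w = seqPrefix x w.length

/-- `x` is a fixed point of `σ`, i.e. `σ(x) = x`: the image under `σ` of every prefix
of `x` is again a prefix of `x`. -/
def IsFixedPoint {A : Type*} (σ : A → List A) (x : ℕ → A) : Prop :=
  ∀ n, IsPrefixSeq (substWord σ (seqPrefix x n)) x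

/-- `σ` is a substitution: some letter `a` is the first letter of `σ(a)`, and
`|σⁿ(b)| → ∞` for every letter `b`. -/
def IsSubstitution {A : Type*} (σ : A → List A) : Prop :=
  (∃ a, (σ a).head? = some a) ∧
  ∀ b, Filter.Tendsto (fun n => (wordIter σ n [b]).length) Filter.atTop Filter.atTop

/-- `σ` is of constant length `p`. -/
def ConstantLength {A : Type*} (σ : A → List A) (p : ℕ) : Prop := ∀ a, (σ a).length = p
/-- The factor `x_{[i, i+n)}` of a sequence. -/
def factorAt {A : Type*} (x : ℕ → A) (i n : ℕ) : List A := (List.range n).map fun k => x (i + k)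

/-- `i` is an occurrence of the word `u` in the sequence `x`. -/
def OccursAt {A : Type*} (x : ℕ → A) (u : List A) (i : ℕ) : Prop := factorAt x i u.length = u

/-- `u` is a factor of `x`. -/
def IsFactor {A : Type*} (x : ℕ → A) (u : List A) : Prop := ∃ i, OccursAt x u i

/-- `u` occurs in `x` with bounded gaps (its set of occurrences is syndetic). -/
def BoundedGaps {A : Type*} (x : ℕ → A) (u : List A) : Prop :=
  ∃ g, 0 < g ∧ ∀ i, ∃ j, i ≤ j ∧ j < i + g ∧ OccursAt x u j

/-- `x` is uniformly recurrent: every factor occurs with bounded gaps. -/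
def UniformlyRecurrent {A : Type*} (x : ℕ → A) : Prop :=
  ∀ u, IsFactor x u → BoundedGaps x u

/-- `w` is a return word to `u` in `x`: `w = x_{[j,k)}` for consecutive
occurrences `j < k` of `u` in `x`. -/
def IsReturnWord {A : Type*} (x : ℕ → A) (u w : List A) : Prop :=
  ∃ j k, j < k ∧ OccursAt x u j ∧ OccursAt x u k ∧
    (∀ m, j < m → m < k → ¬ OccursAt x u m) ∧ w = factorAt x j (k - j)

/-- `x` is linearly recurrent with constant `K`: it is uniformly recurrent and every
return word `w` to every nonempty factor `u` satisfies `|w| ≤ K|u|`. -/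
def LinearlyRecurrent {A : Type*} (x : ℕ → A) (K : ℕ) : Prop :=
  UniformlyRecurrent x ∧ ∀ u w, u ≠ [] → IsReturnWord x u w → w.length ≤ K * u.length

/-- `x` is ultimately periodic. -/
def UltimatelyPeriodic {A : Type*} (x : ℕ → A) : Prop :=
  ∃ N t, 0 < t ∧ ∀ n, N ≤ n → x (n + t) = x n
/-- Integers `p, q` are multiplicatively independent:
`p^k = q^l` (k, l ∈ ℕ) implies `k = l = 0`. -/
def MultiplicativelyIndependent (p q : ℕ) : Prop :=
  ∀ k l : ℕ, p ^ k = q ^ l → k = 0 ∧ l = 0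


/- ===================== Auxiliary lemmas ===================== -/

section AuxLemmas

variable {A : Type*} {σ : A → List A} {p : ℕ} {y : ℕ → A}

lemma substWord_append (u v : List A) :
    substWord σ (u ++ v) = substWord σ u ++ substWord σ v := by
  simp [substWord]

lemma wordIter_append (k : ℕ) (u v : List A) :
    wordIter σ k (u ++ v) = wordIter σ k u ++ wordIter σ k v := by
  induction k generalizing u v with
  | zero => simp [wordIter]
  | succ k ih =>
    simp only [wordIter, Function.iterate_succ_apply] at *
    rw [substWord_append, ih]

lemma wordIter_nil (k : ℕ) : wordIter σ k ([] : List A) = [] := by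
  induction k with
  | zero => simp [wordIter]
  | succ k ih =>
    simp only [wordIter, Function.iterate_succ_apply'] at *
    rw [ih]
    simp [substWord]

lemma substWord_length (hσlen : ConstantLength σ p) (w : List A) :
    (substWord σ w).length = p * w.length := by
  induction w with
  | nil => simp [substWord]
  | cons a w ih =>
    simp [substWord] at ih ⊢
    rw [hσlen a]; ring_nf; omega

lemma wordIter_length (hσlen : ConstantLength σ p) (k : ℕ) (u : List A) :
    (wordIter σ k u).length = p ^ k * u.length := by
  induction k generalizing u with
  | zero => simp [wordIter]
  | succ k ih =>
    simp only [wordIter, Function.iterate_succ_apply]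
    have h2 := ih (substWord σ u)
    simp only [wordIter] at h2
    rw [h2, substWord_length hσlen, pow_succ]
    ring

lemma seqPrefix_length (x : ℕ → A) (n : ℕ) : (seqPrefix x n).length = n := by
  simp [seqPrefix]

lemma prefix_step (hy : IsFixedPoint σ y) (hσlen : ConstantLength σ p) (n : ℕ) :
    seqPrefix y (p * n) = substWord σ (seqPrefix y n) := by
  have h := hy n
  unfold IsPrefixSeq at h
  rw [substWord_length hσlen, seqPrefix_length] at h
  exact h.symm

lemma prefix_pow (hy : IsFixedPoint σ y) (hσlen : ConstantLength σ p) (k n : ℕ) :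
    seqPrefix y (p ^ k * n) = wordIter σ k (seqPrefix y n) := by
  induction k generalizing n with
  | zero => simp [wordIter]
  | succ k ih =>
    have : p ^ (k+1) * n = p ^ k * (p * n) := by ring
    rw [this, ih (p * n), prefix_step hy hσlen]
    simp only [wordIter, Function.iterate_succ_apply]

lemma seqPrefix_succ (x : ℕ → A) (n : ℕ) :
    seqPrefix x (n + 1) = seqPrefix x n ++ [x n] := by
  simp [seqPrefix, List.range_succ]

lemma block_eq (hy : IsFixedPoint σ y) (hσlen : ConstantLength σ p) (k m : ℕ) :
    (List.range (p ^ k)).map (fun r => y (p ^ k * m + r)) = wordIter σ k [y m] := by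
  have h1 : seqPrefix y (p ^ k * (m + 1)) = wordIter σ k (seqPrefix y m) ++ wordIter σ k [y m] := by
    rw [prefix_pow hy hσlen, seqPrefix_succ, wordIter_append]
  have h2 : seqPrefix y (p ^ k * (m + 1)) =
      seqPrefix y (p ^ k * m) ++ (List.range (p ^ k)).map (fun r => y (p ^ k * m + r)) := by
    have : p ^ k * (m + 1) = p ^ k * m + p ^ k := by ring
    rw [this]
    simp [seqPrefix, List.range_add]
  rw [h2, prefix_pow hy hσlen] at h1
  exact List.append_cancel_left h1

lemma mem_of_block (hy : IsFixedPoint σ y) (hσlen : ConstantLength σ p)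
    (k m r : ℕ) (hr : r < p ^ k) :
    y (p ^ k * m + r) ∈ wordIter σ k [y m] := by
  rw [← block_eq hy hσlen]
  exact List.mem_map_of_mem (List.mem_range.mpr hr)

lemma block_mem (hy : IsFixedPoint σ y) (hσlen : ConstantLength σ p)
    (k m : ℕ) (e : A) (he : e ∈ wordIter σ k [y m]) :
    ∃ r, r < p ^ k ∧ y (p ^ k * m + r) = e := by
  rw [← block_eq hy hσlen] at he
  obtain ⟨r, hr, hre⟩ := List.mem_map.mp he
  exact ⟨r, List.mem_range.mp hr, hre⟩

lemma wordIter_word_mem (σ : A → List A) (k : ℕ) (w : List A) (e : A) :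
    e ∈ wordIter σ k w ↔ ∃ a ∈ w, e ∈ wordIter σ k [a] := by
  induction w with
  | nil => simp [wordIter_nil]
  | cons a w ih =>
    rw [show (a :: w) = [a] ++ w from rfl, wordIter_append]
    simp only [List.mem_append, ih, List.mem_cons, List.mem_singleton]
    aesop

lemma mem_map_wordIter_succ {C : Type*} (σ : A → List A) (φ : A → C) (c : C) (k : ℕ) (a : A) :
    c ∈ (wordIter σ (k+1) [a]).map φ ↔ ∃ e ∈ σ a, c ∈ (wordIter σ k [e]).map φ := by
  have h1 : wordIter σ (k+1) [a] = wordIter σ k (σ a) := by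
    simp only [wordIter, Function.iterate_succ_apply]
    congr 1
    simp [substWord]
  rw [h1]
  simp only [List.mem_map]
  constructor
  · rintro ⟨e', he', rfl⟩
    obtain ⟨e, he, he'w⟩ := (wordIter_word_mem σ k (σ a) e').mp he'
    exact ⟨e, he, e', he'w, rfl⟩
  · rintro ⟨e, he, e', he', rfl⟩
    exact ⟨e', (wordIter_word_mem σ k (σ a) e').mpr ⟨e, he, he'⟩, rfl⟩

lemma eventually_periodic {α : Type*} [Finite α] (F : ℕ → α)
    (step : ∀ k k', F k = F k' → F (k+1) = F (k'+1)) :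
    ∃ k0 t, 0 < t ∧ ∀ k, k0 ≤ k → ∀ j, F (k + j*t) = F k := by
  obtain ⟨k0, k1, hne, heq⟩ := Finite.exists_ne_map_eq_of_infinite F
  wlog hlt : k0 < k1 generalizing k0 k1
  · exact this k1 k0 hne.symm heq.symm (by omega)
  have shift : ∀ s, F (k1 + s) = F (k0 + s) := by
    intro s
    induction s with
    | zero => simpa using heq.symm
    | succ s ih => exact step _ _ ih
  set t := k1 - k0 with ht
  have hper : ∀ k, k0 ≤ k → F (k + t) = F k := by
    intro k hk
    have h1 : k + t = k1 + (k - k0) := by omega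
    have h2 : k = k0 + (k - k0) := by omega
    rw [h1, shift (k - k0), ← h2]
  refine ⟨k0, t, by omega, ?_⟩
  intro k hk j
  induction j with
  | zero => simp
  | succ j ih =>
    have : k + (j+1)*t = (k + j*t) + t := by ring
    rw [this, hper _ (by omega), ih]

end AuxLemmas

/- ===================== Density lemmas ===================== -/

set_option maxHeartbeats 1600000 in
lemma nat_rot_dense {θ : ℝ} (hθ : Irrational θ) (hpos : 0 < θ) {u v : ℝ} (huv : u < v) :
    ∃ j' j : ℕ, u ≤ j' * θ - j ∧ (j' : ℝ) * θ - j ≤ v := by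
  set ε := min (v - u) (1/2) with hεdef
  have hε : 0 < ε := lt_min (by linarith) (by norm_num)
  have hεv : ε ≤ v - u := min_le_left _ _
  have hε2 : ε ≤ 1/2 := min_le_right _ _
  obtain ⟨n, hn⟩ := exists_nat_gt (1/ε)
  have hn0 : 0 < n := by
    by_contra h
    push_neg at h
    interval_cases n
    · simp at hn; linarith [one_div_pos.mpr hε]
  have h1n : 1/((n:ℝ)+1) < ε := by
    rw [div_lt_iff₀ (by positivity)]
    rw [div_lt_iff₀ hε] at hn
    nlinarith
  obtain ⟨b0, a0, ha0, _, habs⟩ := Real.exists_int_int_abs_mul_sub_le θ hn0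
  set h := (a0:ℝ)*θ - b0 with hh
  have hne : h ≠ 0 := by
    intro h0
    exact (hθ.intCast_mul ha0.ne').ne_int b0 (by linarith [sub_eq_zero.mp h0])
  have habs' : |h| < ε := lt_of_le_of_lt habs h1n
  have ha0θ : θ ≤ (a0:ℝ)*θ := by
    nlinarith [(by exact_mod_cast ha0 : (0:ℝ) < a0), (by exact_mod_cast ha0 : (1:ℤ) ≤ a0),
      (by exact_mod_cast (Int.add_one_le_iff.mpr ha0) : (1:ℝ) ≤ (a0:ℝ))]
  have hb0 : 0 ≤ b0 := by
    by_contra hb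
    push_neg at hb
    have : (b0:ℝ) ≤ -1 := by exact_mod_cast Int.le_sub_one_of_lt hb
    have h1 : h > 1/2 := by
      have := abs_lt.mp habs'
      nlinarith
    have := abs_lt.mp habs'
    linarith
  set a : ℕ := a0.toNat with hadef
  set b : ℕ := b0.toNat with hbdef
  have haR : (a:ℝ) = (a0:ℝ) := by
    rw [hadef]; exact_mod_cast congrArg (Int.cast : ℤ → ℝ) (Int.toNat_of_nonneg ha0.le)
  have hbR : (b:ℝ) = (b0:ℝ) := by
    rw [hbdef]; exact_mod_cast congrArg (Int.cast : ℤ → ℝ) (Int.toNat_of_nonneg hb0)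
  have habs'' := abs_lt.mp habs'
  rcases lt_or_gt_of_ne hne with hneg | hposh
  · obtain ⟨N, hN⟩ := exists_nat_ge (v/θ)
    have hNθ : v ≤ (N:ℝ)*θ := by
      rw [div_le_iff₀ hpos] at hN; linarith
    have hex : ∃ k' : ℕ, (N:ℝ)*θ + k'*h ≤ v := by
      obtain ⟨k', hk'⟩ := exists_nat_ge (((N:ℝ)*θ - v)/(-h))
      refine ⟨k', ?_⟩
      rw [div_le_iff₀ (by linarith)] at hk'
      nlinarith
    set K := Nat.find hex with hKdef
    have hKs := Nat.find_spec hex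
    have hlb : u ≤ (N:ℝ)*θ + K*h := by
      rcases Nat.eq_zero_or_pos K with h0 | hKpos
      · rw [h0]; push_cast; linarith
      · have hmin := Nat.find_min hex (show K - 1 < K by omega)
        push_neg at hmin
        have hc : ((K-1:ℕ):ℝ) = (K:ℝ) - 1 := by
          push_cast [Nat.cast_sub hKpos]; ring
        rw [hc] at hmin
        nlinarith
    refine ⟨N + K * a, K * b, ?_, ?_⟩
    · have : ((N + K*a : ℕ):ℝ) * θ - ((K*b : ℕ):ℝ) = (N:ℝ)*θ + K*h := by
        push_cast [haR, hbR, hh]; ring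
      rw [this]; exact hlb
    · have : ((N + K*a : ℕ):ℝ) * θ - ((K*b : ℕ):ℝ) = (N:ℝ)*θ + K*h := by
        push_cast [haR, hbR, hh]; ring
      rw [this]; exact hKs
  · obtain ⟨j0, hj0⟩ := exists_nat_ge (-u)
    have hex : ∃ k' : ℕ, u ≤ -(j0:ℝ) + k'*h := by
      obtain ⟨k', hk'⟩ := exists_nat_ge ((u + j0)/h)
      refine ⟨k', ?_⟩
      rw [div_le_iff₀ hposh] at hk'
      nlinarith
    set K := Nat.find hex with hKdef
    have hKs := Nat.find_spec hex
    have hub : -(j0:ℝ) + K*h ≤ v := by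
      rcases Nat.eq_zero_or_pos K with h0 | hKpos
      · rw [h0]; push_cast; linarith
      · have hmin := Nat.find_min hex (show K - 1 < K by omega)
        push_neg at hmin
        have hc : ((K-1:ℕ):ℝ) = (K:ℝ) - 1 := by
          push_cast [Nat.cast_sub hKpos]; ring
        rw [hc] at hmin
        nlinarith
    refine ⟨K * a, j0 + K * b, ?_, ?_⟩
    · have : ((K*a : ℕ):ℝ) * θ - ((j0 + K*b : ℕ):ℝ) = -(j0:ℝ) + K*h := by
        push_cast [haR, hbR, hh]; ring
      rw [this]; exact hKs
    · have : ((K*a : ℕ):ℝ) * θ - ((j0 + K*b : ℕ):ℝ) = -(j0:ℝ) + K*h := by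
        push_cast [haR, hbR, hh]; ring
      rw [this]; exact hub

set_option maxHeartbeats 2000000 in
lemma log_ratio_irrational {p q tp tq : ℕ} (hp : 2 ≤ p) (hq : 2 ≤ q)
    (htp : 0 < tp) (htq : 0 < tq) (hind : MultiplicativelyIndependent p q) :
    Irrational ((tp * Real.log p) / (tq * Real.log q)) := by
  have hlp : 0 < Real.log p := Real.log_pos (by exact_mod_cast hp)
  have hlq : 0 < Real.log q := Real.log_pos (by exact_mod_cast hq)
  rintro ⟨r, hr⟩
  have hβ : (0:ℝ) < tq * Real.log q := by positivity
  have hr' : (r:ℝ) * (tq * Real.log q) = tp * Real.log p := by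
    field_simp at hr
    linarith [hr]
  have hrpos : 0 < r := by
    by_contra hneg
    push_neg at hneg
    have : ((r:ℝ)) ≤ 0 := by exact_mod_cast hneg
    nlinarith [mul_pos (show (0:ℝ) < tp by exact_mod_cast htp) hlp]
  have hnum : 0 < r.num := Rat.num_pos.mpr hrpos
  have hcast : (r:ℝ) = (r.num:ℝ) / (r.den:ℝ) := by rw [Rat.cast_def]
  have hden : (0:ℝ) < (r.den:ℝ) := by exact_mod_cast r.pos
  have key : (r.num:ℝ) * (tq * Real.log q) = (r.den:ℝ) * (tp * Real.log p) := by
    rw [hcast] at hr'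
    field_simp at hr'
    linarith [hr']
  set a : ℕ := r.num.toNat with hadef
  have haR : (a:ℝ) = (r.num:ℝ) := by
    exact_mod_cast congrArg (Int.cast : ℤ → ℝ) (Int.toNat_of_nonneg hnum.le)
  have hlog : Real.log ((q:ℝ) ^ (a * tq)) = Real.log ((p:ℝ) ^ (r.den * tp)) := by
    rw [Real.log_pow, Real.log_pow]
    push_cast [haR]
    nlinarith [key]
  have hqpos : (0:ℝ) < (q:ℝ) ^ (a * tq) := by positivity
  have hppos : (0:ℝ) < (p:ℝ) ^ (r.den * tp) := by positivity
  have heq : ((q:ℝ)) ^ (a * tq) = (p:ℝ) ^ (r.den * tp) :=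
    Real.log_injOn_pos (Set.mem_Ioi.mpr hqpos) (Set.mem_Ioi.mpr hppos) hlog
  have heqn : q ^ (a * tq) = p ^ (r.den * tp) := by exact_mod_cast heq
  obtain ⟨h1, h2⟩ := hind (r.den * tp) (a * tq) heqn.symm
  exact Nat.mul_ne_zero (by have := r.pos; omega) (by omega) h1

set_option maxHeartbeats 2000000 in
lemma exists_pow_between {p q tp tq : ℕ} (hp : 2 ≤ p) (hq : 2 ≤ q)
    (htp : 0 < tp) (htq : 0 < tq) (hind : MultiplicativelyIndependent p q)
    (k0 l0 m m' : ℕ) (hm : 2 ≤ m) (hmm : m ≤ m') :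
    ∃ j' j : ℕ, (m-1) * q^(l0+j*tq) ≤ m' * p^(k0+j'*tp) ∧
      (m'+1) * p^(k0+j'*tp) ≤ m * q^(l0+j*tq) := by
  have hlp : 0 < Real.log p := Real.log_pos (by exact_mod_cast hp)
  have hlq : 0 < Real.log q := Real.log_pos (by exact_mod_cast hq)
  set α := (tp:ℝ) * Real.log p with hα
  set β := (tq:ℝ) * Real.log q with hβ
  have hαpos : 0 < α := by positivity
  have hβpos : 0 < β := by positivity
  have hθirr : Irrational (α / β) := log_ratio_irrational hp hq htp htq hind
  have hθpos : 0 < α / β := by positivity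
  have hm1R : ((m-1:ℕ):ℝ) = (m:ℝ) - 1 := by
    push_cast [Nat.cast_sub (by omega : 1 ≤ m)]; ring
  have hm1pos : (0:ℝ) < ((m-1:ℕ):ℝ) := by
    rw [hm1R]
    have h2m : (2:ℝ) ≤ (m:ℝ) := by exact_mod_cast hm
    linarith
  have hm'pos : (0:ℝ) < (m':ℝ) := by
    have h2m : 2 ≤ m' := le_trans hm hmm
    exact_mod_cast (by omega : 0 < m')
  have hmpos : (0:ℝ) < (m:ℝ) := by exact_mod_cast (by omega : 0 < m)
  have hm'1pos : (0:ℝ) < (m':ℝ) + 1 := by linarith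
  set U := (Real.log ((m-1:ℕ):ℝ) + l0*Real.log q - Real.log m' - k0*Real.log p)/β with hU
  set V := (Real.log (m:ℝ) + l0*Real.log q - Real.log ((m':ℝ)+1) - k0*Real.log p)/β with hV
  have hloglt : Real.log (((m-1:ℕ):ℝ)) + Real.log ((m':ℝ)+1) < Real.log (m:ℝ) + Real.log (m':ℝ) := by
    have hnat : (m-1) * (m'+1) < m * m' := by
      have h2 : 1 ≤ m := by omega
      have := Nat.sub_add_cancel h2
      nlinarith
    have hRR : ((m-1:ℕ):ℝ) * ((m':ℝ)+1) < (m:ℝ) * m' := by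
      have := (Nat.cast_lt (α := ℝ)).mpr hnat
      push_cast at this
      linarith
    rw [← Real.log_mul (by linarith) (by linarith), ← Real.log_mul (by linarith) (by linarith)]
    exact Real.log_lt_log (by positivity) hRR
  have hUV : U < V := by
    rw [hU, hV, div_lt_div_iff_of_pos_right hβpos]
    linarith
  obtain ⟨j', j, hL, hR⟩ := nat_rot_dense hθirr hθpos hUV
  have hβne : β ≠ 0 := ne_of_gt hβpos
  have hL' : Real.log ((m-1:ℕ):ℝ) + (l0 + j*tq)*Real.log q
      ≤ Real.log (m':ℝ) + (k0 + j'*tp)*Real.log p := by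
    have h1 : U * β ≤ ((j':ℝ) * (α/β) - j) * β := by nlinarith
    rw [hU, div_mul_cancel₀ _ hβne] at h1
    have h2 : ((j':ℝ) * (α/β) - j) * β = j' * α - j * β := by field_simp
    rw [h2, hα, hβ] at h1
    push_cast
    nlinarith [h1]
  have hR' : Real.log ((m':ℝ)+1) + (k0 + j'*tp)*Real.log p
      ≤ Real.log (m:ℝ) + (l0 + j*tq)*Real.log q := by
    have h1 : ((j':ℝ) * (α/β) - j) * β ≤ V * β := by nlinarith
    rw [hV, div_mul_cancel₀ _ hβne] at h1
    have h2 : ((j':ℝ) * (α/β) - j) * β = j' * α - j * β := by field_simp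
    rw [h2, hα, hβ] at h1
    push_cast
    nlinarith [h1]
  have hppos : (0:ℝ) < (p:ℝ) := by exact_mod_cast (by omega : 0 < p)
  have hqpos : (0:ℝ) < (q:ℝ) := by exact_mod_cast (by omega : 0 < q)
  refine ⟨j', j, ?_, ?_⟩
  · have hreal : ((m-1:ℕ):ℝ) * (q:ℝ)^(l0+j*tq) ≤ (m':ℝ) * (p:ℝ)^(k0+j'*tp) := by
      rw [← Real.log_le_log_iff (by positivity) (by positivity),
        Real.log_mul (ne_of_gt hm1pos) (by positivity),
        Real.log_mul (ne_of_gt hm'pos) (by positivity),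
        Real.log_pow, Real.log_pow]
      push_cast at hL' ⊢
      linarith
    exact_mod_cast hreal
  · have hreal : ((m':ℝ)+1) * (p:ℝ)^(k0+j'*tp) ≤ (m:ℝ) * (q:ℝ)^(l0+j*tq) := by
      rw [← Real.log_le_log_iff (by positivity) (by positivity),
        Real.log_mul (ne_of_gt hm'1pos) (by positivity),
        Real.log_mul (ne_of_gt hmpos) (by positivity),
        Real.log_pow, Real.log_pow]
      push_cast at hR' ⊢
      linarith
    exact_mod_cast hreal

/-- **Letters appear with bounded gaps.** Let `p, q ≥ 2` be multiplicatively independent,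
`σ` a substitution of constant length `p` with fixed point `y`, `τ` a substitution of
constant length `q` with fixed point `z`, and `φ, ψ` letter-to-letter morphisms with
`φ(y) = ψ(z) = x`. Then every letter of `C` having infinitely many occurrences in `x`
occurs in `x` with bounded gaps. -/
theorem letters_bounded_gaps {A B C : Type*} [Fintype A] [Fintype B] [Fintype C]
    (p q : ℕ) (hp : 2 ≤ p) (hq : 2 ≤ q) (hind : MultiplicativelyIndependent p q)
    (σ : A → List A) (hσ : IsSubstitution σ) (hσlen : ConstantLength σ p)
    (y : ℕ → A) (hy : IsFixedPoint σ y)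
    (τ : B → List B) (hτ : IsSubstitution τ) (hτlen : ConstantLength τ q)
    (z : ℕ → B) (hz : IsFixedPoint τ z)
    (φ : A → C) (ψ : B → C) (x : ℕ → C) (hφ : φ ∘ y = x) (hψ : ψ ∘ z = x) :
    ∀ c : C, { i : ℕ | x i = c }.Infinite → BoundedGaps x [c] := by
  classical
  intro c hinf
  by_contra hnotBG
  unfold BoundedGaps at hnotBG
  push_neg at hnotBG
  have hx : ∀ i, x i = φ (y i) := fun i => (congrFun hφ i).symm
  have hxz : ∀ i, x i = ψ (z i) := fun i => (congrFun hψ i).symm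
  have hOcc : ∀ j, OccursAt x [c] j ↔ x j = c := by
    intro j
    have h1 : List.range 1 = [0] := rfl
    simp [OccursAt, factorAt, h1]
  -- classification functions
  obtain ⟨k0p, tp, htp0, hperσ⟩ :=
    eventually_periodic (fun k (a : A) => decide (c ∈ (wordIter σ k [a]).map φ))
      (by
        intro k k' h
        funext a
        simp only [decide_eq_decide, mem_map_wordIter_succ]
        exact exists_congr fun e => and_congr_right fun _ =>
          decide_eq_decide.mp (congrFun h e))
  obtain ⟨k0q, tq, htq0, hperτ⟩ :=
    eventually_periodic (fun l (b : B) => decide (c ∈ (wordIter τ l [b]).map ψ))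
      (by
        intro k k' h
        funext b
        simp only [decide_eq_decide, mem_map_wordIter_succ]
        exact exists_congr fun e => and_congr_right fun _ =>
          decide_eq_decide.mp (congrFun h e))
  have hperσ' : ∀ j a, (c ∈ (wordIter σ (k0p + j*tp) [a]).map φ) ↔
      (c ∈ (wordIter σ k0p [a]).map φ) := by
    intro j a
    have := congrFun (hperσ k0p le_rfl j) a
    simp only [decide_eq_decide] at this
    exact this
  have hperτ' : ∀ j b, (c ∈ (wordIter τ (k0q + j*tq) [b]).map ψ) ↔
      (c ∈ (wordIter τ k0q [b]).map ψ) := by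
    intro j b
    have := congrFun (hperτ k0q le_rfl j) b
    simp only [decide_eq_decide] at this
    exact this
  have hQpos : 0 < q ^ k0q := pow_pos (by omega) k0q
  have hPpos : 0 < p ^ k0p := pow_pos (by omega) k0p
  -- ============ q-side: a letter giving long c-free blocks ============
  have hQ : ∃ m : ℕ, 2 ≤ m ∧ ¬ (c ∈ (wordIter τ k0q [z (m-1)]).map ψ) := by
    obtain ⟨i, hi⟩ := hnotBG (2 * q ^ k0q) (by positivity)
    have hex : ∃ s, i ≤ s ∧ x s = c := by
      obtain ⟨s, hsS, hlt⟩ := hinf.exists_gt i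
      exact ⟨s, hlt.le, hsS⟩
    obtain ⟨hin, hxn⟩ := Nat.find_spec hex
    set n := Nat.find hex with hn
    have hgap : i + 2 * q ^ k0q ≤ n := by
      by_contra hlt
      push_neg at hlt
      exact hi n hin (by omega) ((hOcc n).mpr hxn)
    set m := n / q ^ k0q with hm
    have hm2 : 2 ≤ m := by
      rw [hm, Nat.le_div_iff_mul_le hQpos]
      omega
    refine ⟨m, hm2, ?_⟩
    intro hmem
    obtain ⟨e, he, hec⟩ := List.mem_map.mp hmem
    obtain ⟨r, hr, hz_r⟩ := block_mem hz hτlen k0q (m-1) e he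
    have hdm : q ^ k0q * m + n % q ^ k0q = n := by
      rw [hm]; exact Nat.div_add_mod n (q ^ k0q)
    have hmod : n % q ^ k0q < q ^ k0q := Nat.mod_lt _ hQpos
    have hsplit : q ^ k0q * (m-1) + q ^ k0q = q ^ k0q * m := by
      have h1 : m - 1 + 1 = m := by omega
      calc q ^ k0q * (m-1) + q ^ k0q = q ^ k0q * ((m-1)+1) := by ring
        _ = q ^ k0q * m := by rw [h1]
    have hwn : q ^ k0q * (m-1) + r < n := by
      have h1 : q ^ k0q * (m-1) + r < q ^ k0q * m := by
        rw [← hsplit]; exact Nat.add_lt_add_left hr _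
      exact lt_of_lt_of_le h1 (Nat.le.intro hdm)
    have hiw : i ≤ q ^ k0q * (m-1) + r := by
      have h3 : n < q ^ k0q * m + q ^ k0q :=
        hdm ▸ Nat.add_lt_add_left hmod _
      have h5 : i + 2 * q ^ k0q < q ^ k0q * (m-1) + 2 * q ^ k0q := by
        have h4 : q ^ k0q * m + q ^ k0q = q ^ k0q * (m-1) + 2 * q ^ k0q := by
          rw [← hsplit]; ring
        calc i + 2 * q ^ k0q ≤ n := hgap
          _ < q ^ k0q * m + q ^ k0q := h3
          _ = q ^ k0q * (m-1) + 2 * q ^ k0q := h4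
      have h6 : i < q ^ k0q * (m-1) := Nat.lt_of_add_lt_add_right h5
      exact le_trans h6.le (Nat.le_add_right _ _)
    have hxw : x (q ^ k0q * (m-1) + r) = c := by
      rw [hxz, hz_r]; exact hec
    exact Nat.find_min hex hwn ⟨hiw, hxw⟩
  obtain ⟨m, hm2, hFb⟩ := hQ
  -- c-free blocks at all levels k0q + j*tq
  have hQfree : ∀ jj r, r < q ^ (k0q + jj*tq) →
      x (q ^ (k0q + jj*tq) * (m-1) + r) ≠ c := by
    intro jj r hr hxc
    apply hFb
    apply (hperτ' jj (z (m-1))).mp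
    exact List.mem_map.mpr ⟨z (q ^ (k0q + jj*tq) * (m-1) + r),
      mem_of_block hz hτlen _ (m-1) r hr, by rw [← hxz]; exact hxc⟩
  -- ============ p-side: a large position m' whose blocks all contain c ============
  obtain ⟨s, hsS, hslt⟩ := hinf.exists_gt (p ^ k0p * (m+1))
  set m' := s / p ^ k0p with hm'
  have hmm' : m ≤ m' := by
    rw [hm', Nat.le_div_iff_mul_le hPpos]
    calc m * p ^ k0p = p ^ k0p * m := Nat.mul_comm _ _
      _ ≤ p ^ k0p * (m+1) := Nat.mul_le_mul_left _ (by omega)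
      _ ≤ s := hslt.le
  have hFσm' : c ∈ (wordIter σ k0p [y m']).map φ := by
    have hdm : p ^ k0p * m' + s % p ^ k0p = s := by
      rw [hm']; exact Nat.div_add_mod s _
    have hmod : s % p ^ k0p < p ^ k0p := Nat.mod_lt _ hPpos
    exact List.mem_map.mpr ⟨y (p ^ k0p * m' + s % p ^ k0p),
      mem_of_block hy hσlen k0p m' _ hmod, by rw [← hx, hdm]; exact hsS⟩
  have hPside : ∀ j', ∃ i, p ^ (k0p + j'*tp) * m' ≤ i ∧
      i < p ^ (k0p + j'*tp) * (m'+1) ∧ x i = c := by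
    intro j'
    have hmem : c ∈ (wordIter σ (k0p + j'*tp) [y m']).map φ :=
      (hperσ' j' (y m')).mpr hFσm'
    obtain ⟨e, he, hec⟩ := List.mem_map.mp hmem
    obtain ⟨r, hr, hyr⟩ := block_mem hy hσlen (k0p + j'*tp) m' e he
    refine ⟨p ^ (k0p + j'*tp) * m' + r, Nat.le_add_right _ _, ?_, ?_⟩
    · have : p ^ (k0p + j'*tp) * (m'+1) = p ^ (k0p + j'*tp) * m' + p ^ (k0p + j'*tp) := by
        ring
      rw [this]
      exact Nat.add_lt_add_left hr _
    · rw [hx, hyr]; exact hec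
  -- ============ combine via multiplicative independence ============
  obtain ⟨j', jj, hj1, hj2⟩ :=
    exists_pow_between hp hq htp0 htq0 hind k0p k0q m m' hm2 hmm'
  obtain ⟨i, hi1, hi2, hic⟩ := hPside j'
  have hLpos : 0 < q ^ (k0q + jj*tq) := pow_pos (by omega) _
  have hsplit2 : q ^ (k0q + jj*tq) * (m-1) + q ^ (k0q + jj*tq) = q ^ (k0q + jj*tq) * m := by
    have h1 : m - 1 + 1 = m := by omega
    calc q ^ (k0q + jj*tq) * (m-1) + q ^ (k0q + jj*tq)
        = q ^ (k0q + jj*tq) * ((m-1)+1) := by ring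
      _ = q ^ (k0q + jj*tq) * m := by rw [h1]
  have hlow : q ^ (k0q + jj*tq) * (m-1) ≤ i :=
    calc q ^ (k0q + jj*tq) * (m-1) = (m-1) * q ^ (k0q + jj*tq) := Nat.mul_comm _ _
      _ ≤ m' * p ^ (k0p + j'*tp) := hj1
      _ = p ^ (k0p + j'*tp) * m' := Nat.mul_comm _ _
      _ ≤ i := hi1
  have hhigh : i < q ^ (k0q + jj*tq) * (m-1) + q ^ (k0q + jj*tq) := by
    rw [hsplit2]
    calc i < p ^ (k0p + j'*tp) * (m'+1) := hi2
      _ = (m'+1) * p ^ (k0p + j'*tp) := Nat.mul_comm _ _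
      _ ≤ m * q ^ (k0q + jj*tq) := hj2
      _ = q ^ (k0q + jj*tq) * m := Nat.mul_comm _ _
  have hre : q ^ (k0q + jj*tq) * (m-1) + (i - q ^ (k0q + jj*tq) * (m-1)) = i :=
    Nat.add_sub_cancel' hlow
  have hrlt : i - q ^ (k0q + jj*tq) * (m-1) < q ^ (k0q + jj*tq) := by
    have h7 := hhigh
    rw [← hre] at h7
    exact Nat.lt_of_add_lt_add_left h7
  exact hQfree jj _ hrlt (by rw [hre]; exact hic)
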